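/- The number P_{n,k} of distinct species visited in a k-sample from D_n(θ) satisfies P(P_{n,k}=p) = [n!/(n-p)!] · B_{k,p}(θ)/(nθ)_k, where B_{k,p}(θ) = (k!/p!) Σ_{b_1,...,b_p ≥ 1, Σ b_q = k} ∏_{q=1}^p (θ)_{b_q}/b_q! is the Bell polynomial in the variables x_i = (θ)_i. -/

import Mathlib

open Finset

/-- Rising factorial `(x)_k = x(x+1)⋯(x+k-1)`. -/
noncomputable def rf (x : ℝ) (k : ℕ) : ℝ := ∏ i ∈ Finset.range k, (x + i)

/-- The Bell polynomial `B_{k,p}(θ)` in the variables `x_i = (θ)_i`: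
`B_{k,p}(θ) = (k!/p!) ∑_{b_1,…,b_p ≥ 1, ∑ b_q = k} ∏ (θ)_{b_q}/b_q!`. -/
noncomputable def BellP (θ : ℝ) (k p : ℕ) : ℝ :=
  ((k.factorial : ℝ) / (p.factorial : ℝ)) *
    ∑ b ∈ Finset.Nat.antidiagonalTuple p k,
      if ∀ q, 1 ≤ b q then ∏ q, rf θ (b q) / ((b q).factorial : ℝ) else 0

/-- Unconditional probability of a sample sequence of `k` conditionally i.i.d.
draws from `Sₙ ~ D_n(θ)` (equivalently, the Pólya urn law). -/
noncomputable def sampleProb (θ : ℝ) {n k : ℕ} (m : Fin k → Fin n) : ℝ :=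
  (∏ c : Fin n, rf θ ((Finset.univ.filter fun l => m l = c).card)) /
    rf ((n : ℝ) * θ) k

section Aux
open MvPolynomial

variable {k n p : ℕ}

def ctv {k n : ℕ} (m : Fin k → Fin n) : Fin n → ℕ :=
  fun c => (Finset.univ.filter fun l => m l = c).card

lemma sum_ctv (m : Fin k → Fin n) : ∑ c, ctv m c = k := by
  classical
  have := Finset.card_eq_sum_card_fiberwise (f := m) (s := Finset.univ) (t := Finset.univ)
    (fun x _ => Finset.mem_univ (m x))
  simpa [ctv] using this.symm

lemma prod_X_univ (d : Fin n → ℕ) :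
    (∏ c : Fin n, (X c : MvPolynomial (Fin n) ℕ) ^ d c)
      = monomial (Finsupp.equivFunOnFinite.symm d) 1 := by
  set s : (Fin n) →₀ ℕ := Finsupp.equivFunOnFinite.symm d with hs
  have hd : ∀ c, d c = s c := fun c => rfl
  rw [← prod_X_pow_eq_monomial (s := s)]
  refine (Finset.prod_subset (Finset.subset_univ _) ?_).symm
  intro x _ hx
  have : s x = 0 := by simpa using (Finsupp.notMem_support_iff.mp hx)
  simp [hd, this]

lemma count_multinomial (c : Fin n → ℕ) (hc : ∑ j, c j = k) :
    (Finset.univ.filter fun m : Fin k → Fin n => ctv m = c).card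
      = Nat.multinomial Finset.univ c := by
  classical
  have key1 : (∑ j : Fin n, (X j : MvPolynomial (Fin n) ℕ)) ^ k
      = ∑ m : Fin k → Fin n, monomial (Finsupp.equivFunOnFinite.symm (ctv m)) 1 := by
    rw [Fintype.sum_pow]
    refine Finset.sum_congr rfl fun m _ => ?_
    rw [← prod_X_univ (ctv m)]
    have := Finset.prod_fiberwise_of_maps_to (g := m) (s := (Finset.univ : Finset (Fin k)))
      (t := (Finset.univ : Finset (Fin n))) (fun x _ => Finset.mem_univ (m x))
      (fun l => (X (m l) : MvPolynomial (Fin n) ℕ))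
    rw [← this]
    refine Finset.prod_congr rfl fun j _ => ?_
    rw [Finset.prod_congr rfl (fun l hl => ?_), Finset.prod_const, ctv]
    simp only [Finset.mem_filter] at hl
    rw [hl.2]
  have key2 : (∑ j : Fin n, (X j : MvPolynomial (Fin n) ℕ)) ^ k
      = ∑ c' ∈ Finset.piAntidiag Finset.univ k,
          (Nat.multinomial Finset.univ c' : MvPolynomial (Fin n) ℕ) *
            monomial (Finsupp.equivFunOnFinite.symm c') 1 := by
    rw [Finset.sum_pow_eq_sum_piAntidiag]
    exact Finset.sum_congr rfl fun c' _ => by rw [prod_X_univ]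
  have hco := congrArg (MvPolynomial.coeff (Finsupp.equivFunOnFinite.symm c)) (key1.symm.trans key2)
  rw [MvPolynomial.coeff_sum, MvPolynomial.coeff_sum] at hco
  simp only [MvPolynomial.coeff_monomial, EmbeddingLike.apply_eq_iff_eq] at hco
  simp only [← MvPolynomial.C_eq_coe_nat, MvPolynomial.coeff_C_mul, MvPolynomial.coeff_monomial,
    EmbeddingLike.apply_eq_iff_eq, mul_ite, mul_one, mul_zero] at hco
  rw [Finset.sum_ite_eq' (Finset.piAntidiag Finset.univ k)] at hco
  rw [if_pos (by rw [Finset.mem_piAntidiag]; exact ⟨hc, fun i _ => Finset.mem_univ i⟩)] at hco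
  exact (by simpa [Finset.sum_boole] using hco.symm : Nat.multinomial Finset.univ c = _).symm

section
variable {M : Type*} [CommMonoid M]

@[to_additive]
lemma prod_over_T (T : Finset (Fin n)) (hT : T.card = p) (f : Fin n → M)
    (hf : ∀ j ∉ T, f j = 1) :
    ∏ j, f j = ∏ q : Fin p, f (T.orderIsoOfFin hT q) := by
  rw [← Finset.prod_subset (Finset.subset_univ T) (fun x _ hx => hf x hx)]
  rw [← Finset.prod_coe_sort T f]
  exact (Fintype.prod_equiv (T.orderIsoOfFin hT).toEquiv
    (fun q => f (T.orderIsoOfFin hT q)) (fun x => f x) (fun q => rfl)).symm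

end


lemma inner_bij (g : ℕ → ℝ) (hg : g 0 = 1) (T : Finset (Fin n)) (hT : T.card = p) :
    ∑ c ∈ (Finset.piAntidiag (Finset.univ : Finset (Fin n)) k).filter
        (fun c => Finset.univ.filter (fun j => c j ≠ 0) = T), ∏ j, g (c j)
      = ∑ b ∈ (Finset.Nat.antidiagonalTuple p k).filter (fun b => ∀ q, 1 ≤ b q),
          ∏ q, g (b q) := by
  classical
  set e := T.orderIsoOfFin hT with he
  have hsub : ∀ q : Fin p, (⟨(e q : Fin n), (e q).2⟩ : {x // x ∈ T}) = e q :=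
    fun q => Subtype.ext rfl
  have hmemS : ∀ c, c ∈ (Finset.piAntidiag (Finset.univ : Finset (Fin n)) k).filter
      (fun c => Finset.univ.filter (fun j => c j ≠ 0) = T) ↔
      (∑ j, c j = k ∧ ∀ j, c j ≠ 0 ↔ j ∈ T) := by
    intro c
    rw [Finset.mem_filter, Finset.mem_piAntidiag]
    constructor
    · rintro ⟨⟨h1, -⟩, h2⟩
      refine ⟨h1, fun j => ?_⟩
      rw [← h2]
      simp
    · rintro ⟨h1, h2⟩
      refine ⟨⟨h1, fun i _ => Finset.mem_univ i⟩, ?_⟩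
      ext j
      simp [h2 j]
  have hmemT : ∀ b : Fin p → ℕ, b ∈ (Finset.Nat.antidiagonalTuple p k).filter
      (fun b => ∀ q, 1 ≤ b q) ↔ (∑ q, b q = k ∧ ∀ q, 1 ≤ b q) := by
    intro b
    rw [Finset.mem_filter, Finset.Nat.mem_antidiagonalTuple]
  refine Finset.sum_nbij' (i := fun c q => c (e q))
    (j := fun b j => if h : j ∈ T then b (e.symm ⟨j, h⟩) else 0) ?_ ?_ ?_ ?_ ?_
  · intro c hc
    rw [hmemS] at hc
    rw [hmemT]
    constructor
    · rw [← hc.1]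
      exact (sum_over_T T hT (fun j => c j) (fun j hj => by
        by_contra h; exact hj ((hc.2 j).mp h))).symm
    · intro q
      exact Nat.one_le_iff_ne_zero.mpr ((hc.2 (e q)).mpr (e q).2)
  · intro b hb
    rw [hmemT] at hb
    rw [hmemS]
    refine ⟨?_, fun j => ?_⟩
    · rw [← hb.1, sum_over_T T hT _ (fun j hj => by rw [dif_neg hj])]
      refine Finset.sum_congr rfl fun q _ => ?_
      rw [dif_pos (e q).2, hsub q, OrderIso.symm_apply_apply]
    · constructor
      · intro hj
        by_contra h
        exact hj (dif_neg h)
      · intro hj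
        rw [dif_pos hj]
        exact Nat.one_le_iff_ne_zero.mp (hb.2 _)
  · intro c hc
    rw [hmemS] at hc
    funext j
    dsimp only
    by_cases h : j ∈ T
    · rw [dif_pos h]
      have hco : ((e (e.symm ⟨j, h⟩) : {x // x ∈ T}) : Fin n) = j :=
        congrArg Subtype.val (e.apply_symm_apply ⟨j, h⟩)
      rw [hco]
    · rw [dif_neg h]
      have : c j = 0 := by
        by_contra hc0
        exact h ((hc.2 j).mp hc0)
      rw [this]
  · intro b hb
    funext q
    dsimp only
    rw [dif_pos (e q).2, hsub q, OrderIso.symm_apply_apply]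
  · intro c hc
    rw [hmemS] at hc
    refine prod_over_T T hT (fun j => g (c j)) (fun j hj => ?_)
    have : c j = 0 := by
      by_contra hc0
      exact hj ((hc.2 j).mp hc0)
    rw [this, hg]

lemma rf_zero (θ : ℝ) : rf θ 0 = 1 := by simp [rf]

lemma himg (m : Fin k → Fin n) :
    Finset.univ.image m = Finset.univ.filter (fun j => ctv m j ≠ 0) := by
  ext j
  have h2 : (ctv m j ≠ 0) ↔ (Finset.univ.filter fun l => m l = j).Nonempty := by
    rw [ctv, ← Finset.card_pos, Nat.pos_iff_ne_zero]
  simp [Finset.mem_image, h2, Finset.filter_nonempty_iff]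

lemma numer (θ : ℝ) (n k p : ℕ) :
    (∑ m : Fin k → Fin n,
        if (Finset.univ.image m).card = p then ∏ c, rf θ (ctv m c) else 0)
    = (n.choose p : ℝ) *
      ∑ b ∈ (Finset.Nat.antidiagonalTuple p k).filter (fun b => ∀ q, 1 ≤ b q),
        ((k.factorial : ℝ) * ∏ q, rf θ (b q) / ((b q).factorial : ℝ)) := by
  classical
  rw [← Finset.sum_fiberwise_of_maps_to (g := ctv)
      (t := Finset.piAntidiag (Finset.univ : Finset (Fin n)) k)
      (fun m _ => by rw [Finset.mem_piAntidiag]; exact ⟨sum_ctv m, fun i _ => Finset.mem_univ i⟩)]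
  have step1 : ∀ c ∈ Finset.piAntidiag (Finset.univ : Finset (Fin n)) k,
      (∑ m ∈ Finset.univ.filter (fun m : Fin k → Fin n => ctv m = c),
        if (Finset.univ.image m).card = p then ∏ j, rf θ (ctv m j) else 0)
      = if (Finset.univ.filter (fun j => c j ≠ 0)).card = p
          then (k.factorial : ℝ) * ∏ j, rf θ (c j) / ((c j).factorial : ℝ) else 0 := by
    intro c hc
    rw [Finset.mem_piAntidiag] at hc
    have hrw : ∀ m ∈ Finset.univ.filter (fun m : Fin k → Fin n => ctv m = c),
        (if (Finset.univ.image m).card = p then ∏ j, rf θ (ctv m j) else 0)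
          = if (Finset.univ.filter (fun j => c j ≠ 0)).card = p
              then ∏ j, rf θ (c j) else 0 := by
      intro m hm
      rw [Finset.mem_filter] at hm
      rw [himg m, hm.2]
    rw [Finset.sum_congr rfl hrw, Finset.sum_const, count_multinomial c hc.1, nsmul_eq_mul]
    rw [mul_ite, mul_zero]
    split_ifs with hcond
    · have hF : (∏ j, ((c j).factorial : ℝ)) ≠ 0 :=
        Finset.prod_ne_zero_iff.mpr fun j _ => Nat.cast_ne_zero.mpr (Nat.factorial_ne_zero _)
      have hspec : (∏ j, ((c j).factorial : ℝ)) * (Nat.multinomial Finset.univ c : ℝ)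
          = (k.factorial : ℝ) := by
        rw [← Nat.cast_prod, ← Nat.cast_mul, Nat.multinomial_spec, hc.1]
      rw [Finset.prod_div_distrib]
      rw [← hspec]
      field_simp
    · rfl
  rw [Finset.sum_congr rfl step1, ← Finset.sum_filter]
  have hfilter_eq : ∀ T ∈ Finset.powersetCard p (Finset.univ : Finset (Fin n)),
      ((Finset.piAntidiag (Finset.univ : Finset (Fin n)) k).filter
          (fun c => (Finset.univ.filter (fun j => c j ≠ 0)).card = p)).filter
          (fun c => Finset.univ.filter (fun j => c j ≠ 0) = T)
        = (Finset.piAntidiag (Finset.univ : Finset (Fin n)) k).filter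
          (fun c => Finset.univ.filter (fun j => c j ≠ 0) = T) := by
    intro T hT
    rw [Finset.mem_powersetCard] at hT
    rw [Finset.filter_filter]
    refine Finset.filter_congr fun c _ => ?_
    constructor
    · rintro ⟨-, h2⟩; exact h2
    · intro h2; exact ⟨h2 ▸ hT.2, h2⟩
  rw [← Finset.sum_fiberwise_of_maps_to
      (g := fun c : Fin n → ℕ => Finset.univ.filter (fun j => c j ≠ 0))
      (t := Finset.powersetCard p (Finset.univ : Finset (Fin n)))
      (fun c hcc => by
        rw [Finset.mem_filter] at hcc
        rw [Finset.mem_powersetCard]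
        exact ⟨Finset.subset_univ _, hcc.2⟩)]
  have step2 : ∀ T ∈ Finset.powersetCard p (Finset.univ : Finset (Fin n)),
      (∑ c ∈ ((Finset.piAntidiag (Finset.univ : Finset (Fin n)) k).filter
          (fun c => (Finset.univ.filter (fun j => c j ≠ 0)).card = p)).filter
          (fun c => Finset.univ.filter (fun j => c j ≠ 0) = T),
        ((k.factorial : ℝ) * ∏ j, rf θ (c j) / ((c j).factorial : ℝ)))
      = ∑ b ∈ (Finset.Nat.antidiagonalTuple p k).filter (fun b => ∀ q, 1 ≤ b q),
          ((k.factorial : ℝ) * ∏ q, rf θ (b q) / ((b q).factorial : ℝ)) := by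
    intro T hT
    have hTc : T.card = p := (Finset.mem_powersetCard.mp hT).2
    rw [hfilter_eq T hT, ← Finset.mul_sum, ← Finset.mul_sum]
    rw [inner_bij (fun t => rf θ t / (t.factorial : ℝ)) (by simp [rf_zero]) T hTc]
  rw [Finset.sum_congr rfl step2, Finset.sum_const, nsmul_eq_mul]
  congr 1
  rw [Finset.card_powersetCard]
  simp

end Aux

/-- The number of distinct species visited by a `k`-sample from `D_n(θ)`
satisfies `P(P_{n,k} = p) = [n!/(n-p)!] · B_{k,p}(θ)/(nθ)_k`. -/
theorem distinct_species_law (θ : ℝ) (hθ : 0 < θ) (n k p : ℕ)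
    (hpn : p ≤ n) (hpk : p ≤ k) :
    (∑ m : Fin k → Fin n,
        if (Finset.univ.image m).card = p then sampleProb θ m else 0) =
      ((n.factorial : ℝ) / ((n - p).factorial : ℝ)) * BellP θ k p /
        rf ((n : ℝ) * θ) k := by
  classical
  have hL : ∀ m : Fin k → Fin n,
      (if (Finset.univ.image m).card = p then sampleProb θ m else 0)
        = (if (Finset.univ.image m).card = p then ∏ c, rf θ (ctv m c) else 0) /
            rf ((n : ℝ) * θ) k := by
    intro m
    unfold sampleProb
    split <;> simp [ctv]
  calc (∑ m : Fin k → Fin n,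
        if (Finset.univ.image m).card = p then sampleProb θ m else 0)
      = (∑ m : Fin k → Fin n,
          if (Finset.univ.image m).card = p then ∏ c, rf θ (ctv m c) else 0) /
          rf ((n : ℝ) * θ) k := by
        rw [Finset.sum_congr rfl fun m _ => hL m, ← Finset.sum_div]
    _ = ((n.choose p : ℝ) *
          ∑ b ∈ (Finset.Nat.antidiagonalTuple p k).filter (fun b => ∀ q, 1 ≤ b q),
            ((k.factorial : ℝ) * ∏ q, rf θ (b q) / ((b q).factorial : ℝ))) /
          rf ((n : ℝ) * θ) k := by rw [numer]
    _ = ((n.factorial : ℝ) / ((n - p).factorial : ℝ)) * BellP θ k p /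
          rf ((n : ℝ) * θ) k := by
        congr 1
        rw [BellP, ← Finset.mul_sum, Finset.sum_filter]
        have hch : (n.choose p : ℝ) = (n.factorial : ℝ) /
            ((p.factorial : ℝ) * ((n - p).factorial : ℝ)) := by
          exact_mod_cast Nat.cast_choose ℝ hpn
        rw [hch]
        have h1 : (p.factorial : ℝ) ≠ 0 := Nat.cast_ne_zero.mpr (Nat.factorial_ne_zero _)
        have h2 : ((n - p).factorial : ℝ) ≠ 0 := Nat.cast_ne_zero.mpr (Nat.factorial_ne_zero _)
        field_simp
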